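/- Let N and K_B be positive integers and let B_1, …, B_{K_B} be real N×N matrices. Then there exist an integer K_A with K_A ≤ K_B and real N×N matrices A_1, …, A_{K_A} that are pairwise orthogonal in the Frobenius inner product (i.e., trace(A_jᵀ A_ℓ) = 0 for all j ≠ ℓ) such that for every real N×N matrix M, ∑_{k=1}^{K_B} B_k M B_kᵀ = ∑_{k=1}^{K_A} A_k M A_kᵀ. -/

import Mathlib

open Matrix Finset

/-- Orthogonalization invariance of BEKK coefficient matrices: any finite family of
real `N × N` matrices `B₁, …, B_{K_B}` can be replaced by a family of at most `K_B`
pairwise Frobenius-orthogonal matrices `A₁, …, A_{K_A}` inducing the same quadratic map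
`M ↦ ∑ₖ Bₖ M Bₖᵀ`. -/
theorem bekk_orthogonalization (N K_B : ℕ) (hN : 0 < N) (hKB : 0 < K_B)
    (B : Fin K_B → Matrix (Fin N) (Fin N) ℝ) :
    ∃ (K_A : ℕ) (A : Fin K_A → Matrix (Fin N) (Fin N) ℝ),
      K_A ≤ K_B ∧
      (∀ j ℓ : Fin K_A, j ≠ ℓ → Matrix.trace ((A j)ᵀ * A ℓ) = 0) ∧
      (∀ M : Matrix (Fin N) (Fin N) ℝ,
        ∑ k, B k * M * (B k)ᵀ = ∑ k, A k * M * (A k)ᵀ) := by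
  classical
  set G : Matrix (Fin K_B) (Fin K_B) ℝ :=
    Matrix.of (fun j l => Matrix.trace ((B j)ᵀ * B l)) with hGdef
  have hGh : G.IsHermitian := by
    ext j l
    simp only [conjTranspose_apply, of_apply, star_trivial, hGdef]
    rw [← Matrix.trace_transpose, transpose_mul, transpose_transpose]
  set U : Matrix (Fin K_B) (Fin K_B) ℝ := (hGh.eigenvectorUnitary : Matrix.unitaryGroup (Fin K_B) ℝ).1 with hU
  set O : Matrix (Fin K_B) (Fin K_B) ℝ := star U with hO
  have hOT : Oᵀ = U := by
    rw [hO, Matrix.star_eq_conjTranspose, conjTranspose_eq_transpose_of_trivial,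
      transpose_transpose]
  have hOO : Oᵀ * O = 1 := by
    rw [hOT, hO]
    exact (Matrix.mem_unitaryGroup_iff).mp hGh.eigenvectorUnitary.2
  have hdiag : O * G * Oᵀ = Matrix.diagonal (RCLike.ofReal ∘ hGh.eigenvalues) := by
    rw [hOT, hO]
    have h := hGh.conjStarAlgAut_star_eigenvectorUnitary
    rw [Unitary.conjStarAlgAut_apply] at h
    simpa using h
  set A : Fin K_B → Matrix (Fin N) (Fin N) ℝ := fun k => ∑ l, O k l • B l with hA
  refine ⟨K_B, A, le_refl _, ?_, ?_⟩
  · intro j ℓ hjl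
    have h1 : Matrix.trace ((A j)ᵀ * A ℓ) = (O * G * Oᵀ) j ℓ := by
      simp only [hA, transpose_sum, transpose_smul, Finset.sum_mul, Finset.mul_sum,
        smul_mul_assoc, mul_smul_comm, trace_sum, trace_smul, smul_eq_mul]
      simp only [Matrix.mul_apply, hGdef, of_apply, transpose_apply, Finset.sum_mul,
        Finset.mul_sum]
      refine Finset.sum_congr rfl fun l _ => Finset.sum_congr rfl fun m _ => ?_
      ring
    rw [h1, hdiag, Matrix.diagonal_apply_ne _ hjl]
  · intro M
    have key : ∀ l m : Fin K_B, (∑ k, O k l * O k m) = if l = m then (1:ℝ) else 0 := by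
      intro l m
      have := congrFun (congrFun hOO l) m
      simp only [Matrix.mul_apply, transpose_apply, Matrix.one_apply] at this
      exact this
    have expand : ∑ k, A k * M * (A k)ᵀ
        = ∑ m, ∑ l, (∑ k, O k m * O k l) • (B l * M * (B m)ᵀ) := by
      simp only [hA, transpose_sum, transpose_smul, Finset.sum_mul, Finset.mul_sum,
        smul_mul_assoc, mul_smul_comm, smul_smul, Finset.sum_smul, Finset.smul_sum]
      rw [Finset.sum_comm]
      exact Finset.sum_congr rfl fun x _ => Finset.sum_comm
    rw [expand]
    simp [key, ite_smul, Finset.sum_ite_eq]
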